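/- arXiv:1009.4400 — 3 statements merged into one kernel-verified Lean document; each statement's English description precedes it below -/
import Mathlib

section
/- With φ and ψ as defined, for the rewriting rule A∧(B∧C) ↦ (A∧B)∧C, the pair (φ, ψ) strictly decreases lexicographically: either φ(A∧(B∧C)) > φ((A∧B)∧C), or φ(A∧(B∧C)) = φ((A∧B)∧C) and ψ(A∧(B∧C)) > ψ((A∧B)∧C). -/
/-- First-order formulas: ⊤, ⊥, non-constant atoms `X t⃗` (atoms applied to
de Bruijn term-variable indices), implication, conjunction and universal
quantification (de Bruijn style: `all A` binds index 0). -/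
inductive Formula : Type where
  | top : Formula
  | bot : Formula
  | atom : ℕ → List ℕ → Formula
  | arr : Formula → Formula → Formula
  | and : Formula → Formula → Formula
  | all : Formula → Formula

/-- The measure φ on formulas. -/
def phi : Formula → ℕ
  | .top => 2
  | .bot => 2
  | .atom _ _ => 2
  | .and A B => 2 * (phi A + 1) * phi B
  | .arr A B => phi B ^ phi A
  | .all A => phi A ^ 2

/-- The measure ψ on formulas. -/
def psi : Formula → ℕ
  | .top => 2
  | .bot => 2
  | .atom _ _ => 2
  | .and A B => 2 * (psi A + 1) * psi B
  | .arr A B => psi B ^ psi A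
  | .all A => 2 * psi A

lemma phi_pos : ∀ A : Formula, 0 < phi A := by
  intro A
  induction A with
  | top => simp [phi]
  | bot => simp [phi]
  | atom n l => simp [phi]
  | arr A B ihA ihB => exact pow_pos ihB _
  | and A B ihA ihB => simp [phi]; positivity
  | all A ih => exact pow_pos ih _

/-- For the rewriting rule A∧(B∧C) ↦ (A∧B)∧C, the pair (φ, ψ) strictly
decreases lexicographically. -/
theorem lex_decrease_andAssoc :
    ∀ A B C : Formula,
      phi (.and A (.and B C)) > phi (.and (.and A B) C) ∨
        (phi (.and A (.and B C)) = phi (.and (.and A B) C) ∧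
          psi (.and A (.and B C)) > psi (.and (.and A B) C)) := by
  intro A B C
  left
  have hc : 0 < phi C := phi_pos C
  have ha : 0 < phi A := phi_pos A
  simp only [phi, gt_iff_lt]
  have key : 2 * (2 * (phi A + 1) * phi B + 1) < 2 * (phi A + 1) * (2 * (phi B + 1)) := by
    nlinarith
  calc 2 * (2 * (phi A + 1) * phi B + 1) * phi C
      < 2 * (phi A + 1) * (2 * (phi B + 1)) * phi C :=
        Nat.mul_lt_mul_of_lt_of_le key le_rfl hc
    _ = 2 * (phi A + 1) * (2 * (phi B + 1) * phi C) := by ring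
end

section
/- With φ as defined, φ((A∧B)→C) > φ(A→(B→C)) for all formulas A, B, C. That is, φ(C)^(2(φ(A)+1)φ(B)) > (φ(C)^φ(B))^φ(A), using that φ of any formula is at least 2. -/
lemma phi_ge_two : ∀ A : Formula, 2 ≤ phi A := by
  intro A
  induction A with
  | top => simp [phi]
  | bot => simp [phi]
  | atom _ _ => simp [phi]
  | arr A B ihA ihB => calc 2 ≤ phi B := ihB
                         _ = phi B ^ 1 := (pow_one _).symm
                         _ ≤ phi B ^ phi A := Nat.pow_le_pow_right (by omega) (by omega)
  | and A B ihA ihB => simp only [phi]; nlinarith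
  | all A ih => simp only [phi]; nlinarith

/-- φ((A∧B)→C) > φ(A→(B→C)) for all formulas A, B, C. -/
theorem phi_decrease_curry :
    ∀ A B C : Formula, phi (.arr (.and A B) C) > phi (.arr A (.arr B C)) := by
  intro A B C
  have ha := phi_ge_two A
  have hb := phi_ge_two B
  have hc := phi_ge_two C
  simp only [phi, ← pow_mul]
  apply Nat.pow_lt_pow_right (by omega)
  nlinarith
end

section
/- The rewriting system on formulas given by orienting the equations A∧(B∧C) ↦ (A∧B)∧C, A∧⊤ ↦ A, ⊤∧A ↦ A, (A∧B)→C ↦ A→(B→C), ⊤→A ↦ A, A→(B∧C) ↦ (A→B)∧(A→C), A→⊤ ↦ ⊤, ∀x(A∧B) ↦ (∀x A)∧(∀x B), ∀x⊤ ↦ ⊤, A→∀x B ↦ ∀x(A→B) (x not free in A), applied at any position in a formula, is terminating: there is no infinite rewriting sequence. -/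
/-- Shift the free de Bruijn term-variable indices ≥ c up by one. -/
def Formula.shiftFrom : ℕ → Formula → Formula
  | _, .top => .top
  | _, .bot => .bot
  | c, .atom X args => .atom X (args.map fun n => if n < c then n else n + 1)
  | c, .arr A B => .arr (A.shiftFrom c) (B.shiftFrom c)
  | c, .and A B => .and (A.shiftFrom c) (B.shiftFrom c)
  | c, .all A => .all (A.shiftFrom (c + 1))

/-- `A.shift` is A regarded under one more binder ("x not free in A"). -/
def Formula.shift (A : Formula) : Formula := A.shiftFrom 0

/-- One-step rewriting: the ten oriented isomorphism equations, closed under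
formula contexts.  (De Bruijn style: the side condition "x not free in A" of
the last rule is realized by shifting A under the binder.) -/
inductive Rw : Formula → Formula → Prop where
  | andAssoc (A B C) : Rw (.and A (.and B C)) (.and (.and A B) C)
  | andTopR (A) : Rw (.and A .top) A
  | andTopL (A) : Rw (.and .top A) A
  | curry (A B C) : Rw (.arr (.and A B) C) (.arr A (.arr B C))
  | topArr (A) : Rw (.arr .top A) A
  | distrib (A B C) : Rw (.arr A (.and B C)) (.and (.arr A B) (.arr A C))
  | arrTop (A) : Rw (.arr A .top) .top
  | allAnd (A B) : Rw (.all (.and A B)) (.and (.all A) (.all B))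
  | allTop : Rw (.all .top) .top
  | arrAll (A B) : Rw (.arr A (.all B)) (.all (.arr A.shift B))
  | arrL {A A'} (B) : Rw A A' → Rw (.arr A B) (.arr A' B)
  | arrR (A) {B B'} : Rw B B' → Rw (.arr A B) (.arr A B')
  | andL {A A'} (B) : Rw A A' → Rw (.and A B) (.and A' B)
  | andR (A) {B B'} : Rw B B' → Rw (.and A B) (.and A B')
  | allC {A A'} : Rw A A' → Rw (.all A) (.all A')

theorem two_le_phi (A : Formula) : 2 ≤ phi A := by
  induction A with
  | top => simp [phi]
  | bot => simp [phi]
  | atom => simp [phi]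
  | arr A B ha hb => calc 2 ≤ 2^2 := by norm_num
                     _ ≤ phi B ^ phi A := Nat.pow_le_pow_left hb _ |>.trans (Nat.pow_le_pow_right (by omega) ha)
  | and A B ha hb => simp [phi]; nlinarith
  | all A ha => simp [phi]; nlinarith

theorem two_le_psi (A : Formula) : 2 ≤ psi A := by
  induction A with
  | top => simp [psi]
  | bot => simp [psi]
  | atom => simp [psi]
  | arr A B ha hb => calc 2 ≤ 2^2 := by norm_num
                     _ ≤ psi B ^ psi A := Nat.pow_le_pow_left hb _ |>.trans (Nat.pow_le_pow_right (by omega) ha)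
  | and A B ha hb => simp [psi]; nlinarith
  | all A ha => simp [psi]; omega

theorem phi_shiftFrom (c : ℕ) (A : Formula) : phi (A.shiftFrom c) = phi A := by
  induction A generalizing c <;> simp_all [Formula.shiftFrom, phi]

theorem psi_shiftFrom (c : ℕ) (A : Formula) : psi (A.shiftFrom c) = psi A := by
  induction A generalizing c <;> simp_all [Formula.shiftFrom, psi]


theorem rw_dec {A B : Formula} (h : Rw A B) :
    phi B < phi A ∨ (phi B = phi A ∧ psi B < psi A) := by
  induction h with
  | andAssoc A B C =>
      left
      have ha := two_le_phi A; have hb := two_le_phi B; have hc := two_le_phi C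
      simp only [phi]; nlinarith
  | andTopR A =>
      left; have ha := two_le_phi A; simp only [phi]; nlinarith
  | andTopL A =>
      left; have ha := two_le_phi A; simp only [phi]; nlinarith
  | curry A B C =>
      left
      have ha := two_le_phi A; have hb := two_le_phi B; have hc := two_le_phi C
      simp only [phi]
      rw [← pow_mul]
      exact Nat.pow_lt_pow_right (by omega) (by nlinarith)
  | topArr A =>
      left; have ha := two_le_phi A; simp only [phi]
      calc phi A = phi A ^ 1 := (pow_one _).symm
        _ < phi A ^ 2 := Nat.pow_lt_pow_right (by omega) (by omega)
  | distrib A B C =>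
      left
      have ha := two_le_phi A; have hb := two_le_phi B; have hc := two_le_phi C
      simp only [phi]
      rw [mul_pow, mul_pow]
      have h1 : phi B ^ phi A + 1 ≤ (phi B + 1) ^ phi A := by
        have := Nat.pow_lt_pow_left (show phi B < phi B + 1 by omega) (show phi A ≠ 0 by omega)
        omega
      have h2 : (4:ℕ) ≤ 2 ^ phi A := by
        calc (4:ℕ) = 2^2 := by norm_num
          _ ≤ 2 ^ phi A := Nat.pow_le_pow_right (by omega) ha
      have hcpos : 0 < phi C ^ phi A := pow_pos (by omega) _
      have hbp : 0 < (phi B + 1) ^ phi A := pow_pos (by omega) _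
      calc 2 * (phi B ^ phi A + 1) * phi C ^ phi A
          ≤ 2 * (phi B + 1) ^ phi A * phi C ^ phi A := by
            apply Nat.mul_le_mul_right; apply Nat.mul_le_mul_left; exact h1
        _ < 4 * (phi B + 1) ^ phi A * phi C ^ phi A := by
            exact (Nat.mul_lt_mul_right hcpos).mpr (by nlinarith)
        _ ≤ 2 ^ phi A * (phi B + 1) ^ phi A * phi C ^ phi A := by
            apply Nat.mul_le_mul_right; apply Nat.mul_le_mul_right; exact h2
  | arrTop A =>
      left; have ha := two_le_phi A; simp only [phi]
      calc (2:ℕ) = 2^1 := by norm_num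
        _ < 2 ^ phi A := Nat.pow_lt_pow_right (by omega) (by omega)
  | allAnd A B =>
      left
      have ha := two_le_phi A; have hb := two_le_phi B
      simp only [phi]; nlinarith
  | allTop => left; simp [phi]
  | arrAll A B =>
      right
      constructor
      · simp only [phi, Formula.shift, phi_shiftFrom, ← pow_mul]
        ring_nf
      · have ha := two_le_psi A; have hb := two_le_psi B
        simp only [psi, Formula.shift, psi_shiftFrom]
        rw [mul_pow]
        have h2 : (2:ℕ) < 2 ^ psi A := by
          calc (2:ℕ) = 2^1 := by norm_num
            _ < 2 ^ psi A := Nat.pow_lt_pow_right (by omega) (by omega)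
        have hbp : 0 < psi B ^ psi A := pow_pos (by omega) _
        exact (Nat.mul_lt_mul_right hbp).mpr h2
  | arrL B _ ih =>
      rcases ih with h | ⟨h1, h2⟩
      · left; simp only [phi]
        exact Nat.pow_lt_pow_right (by have := two_le_phi B; omega) h
      · right
        constructor
        · simp only [phi, h1]
        · simp only [psi]
          exact Nat.pow_lt_pow_right (by have := two_le_psi B; omega) h2
  | arrR A _ ih =>
      rcases ih with h | ⟨h1, h2⟩
      · left; simp only [phi]
        exact Nat.pow_lt_pow_left h (by have := two_le_phi A; omega)
      · right
        constructor
        · simp only [phi, h1]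
        · simp only [psi]
          exact Nat.pow_lt_pow_left h2 (by have := two_le_psi A; omega)
  | andL B _ ih =>
      rcases ih with h | ⟨h1, h2⟩
      · left; simp only [phi]
        have := two_le_phi B; nlinarith
      · right
        constructor
        · simp only [phi, h1]
        · simp only [psi]; have := two_le_psi B; nlinarith
  | andR A _ ih =>
      rcases ih with h | ⟨h1, h2⟩
      · left; simp only [phi]
        have := two_le_phi A; nlinarith
      · right
        constructor
        · simp only [phi, h1]
        · simp only [psi]; have := two_le_psi A; nlinarith
  | allC _ ih =>
      rcases ih with h | ⟨h1, h2⟩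
      · left; simp only [phi]
        exact Nat.pow_lt_pow_left h (by omega)
      · right
        constructor
        · simp only [phi, h1]
        · simp only [psi]; omega

/-- The rewriting system is terminating: there is no infinite rewriting
sequence. -/
theorem rw_terminating : ¬ ∃ f : ℕ → Formula, ∀ n : ℕ, Rw (f n) (f (n + 1)) := by
  rintro ⟨f, hf⟩
  have wf : WellFounded ((· < ·) : ℕ ×ₗ ℕ → ℕ ×ₗ ℕ → Prop) := wellFounded_lt
  rw [RelEmbedding.wellFounded_iff_isEmpty] at wf
  exact wf.elim (RelEmbedding.natGT (fun n => toLex (phi (f n), psi (f n))) (fun n => by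
    rcases rw_dec (hf n) with h | ⟨h1, h2⟩
    · exact Prod.Lex.lt_iff.mpr (Or.inl h)
    · exact Prod.Lex.lt_iff.mpr (Or.inr ⟨h1, h2⟩)))
end
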